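/- Let J ⊆ ℝ be an interval with 0 ∈ J, let α ∈ ℕ₀ and β ∈ ℝ with β ≥ α, and let a, b ∈ ℝ with a = 0 if α = 0 and b = 0 if β = 0. Let g₁ : (0,2) → J satisfy lim_{t↓0} g₁(t) = 0 and g₁(t) = a·t^α + b·t^β + q(t) with q ∈ Q_{α,β}, and let g₂ ∈ C^∞(J). Then the function t ↦ g₂(g₁(t)) − g₂(0) − g₂'(0)·a·t^α − g₂'(0)·b·t^β, defined on (0,2), belongs to Q_{α,β}. -/

import Mathlib

open Set Filter

noncomputable section

/-- `P_{α,β}`: finite sums of real powers `t^{α_i}` on `(0,2)`, where integer exponents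
exceed `α` and non-integer exponents exceed `β`. -/
def Pclass (α β : ℝ) : Set (ℝ → ℝ) :=
  { f | ∃ (n : ℕ) (a : Fin n → ℝ) (e : Fin n → ℝ),
      (∀ i, (∃ z : ℤ, e i = (z : ℝ)) → α < e i) ∧
      (∀ i, (¬ ∃ z : ℤ, e i = (z : ℝ)) → β < e i) ∧
      (∀ t ∈ Set.Ioo (0 : ℝ) 2, f t = ∑ i, a i * t ^ (e i)) }

/-- `R_{γ'}`: functions that are `C^∞` on `(0,2)` and whose `m`-th derivatives are
`O(t^{γ'-m})` as `t ↓ 0`. -/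
def Rclass (γ' : ℝ) : Set (ℝ → ℝ) :=
  { f | ContDiffOn ℝ (⊤ : ℕ∞) f (Set.Ioo (0 : ℝ) 2) ∧
      ∀ m : ℕ, ∃ C : ℝ, ∃ ε > (0 : ℝ), ∀ t ∈ Set.Ioo (0 : ℝ) (min ε 2),
        |iteratedDerivWithin m f (Set.Ioo (0 : ℝ) 2) t| ≤ C * t ^ (γ' - m) }

/-- `Q_{α,β} = ∩_{γ'} (P_{α,β} + R_{γ'})` (as functions on `(0,2)`). -/
def Qclass (α β : ℝ) : Set (ℝ → ℝ) :=
  { f | ∀ γ' : ℝ, ∃ p ∈ Pclass α β, ∃ r ∈ Rclass γ',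
      ∀ t ∈ Set.Ioo (0 : ℝ) 2, f t = p t + r t }

namespace QS


lemma uII : UniqueDiffOn ℝ (Set.Ioo (0:ℝ) 2) := isOpen_Ioo.uniqueDiffOn

lemma mem_II {ε t : ℝ} (ht : t ∈ Set.Ioo (0:ℝ) (min ε 2)) : t ∈ Set.Ioo (0:ℝ) 2 :=
  ⟨ht.1, lt_of_lt_of_le ht.2 (min_le_right _ _)⟩

lemma smOn {f : ℝ → ℝ} (h : ContDiffOn ℝ (⊤:ℕ∞) f (Set.Ioo (0:ℝ) 2)) (m : ℕ) :
    ContDiffOn ℝ m f (Set.Ioo (0:ℝ) 2) := h.of_le (by exact_mod_cast le_top)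

lemma Rcongr {σ : ℝ} {f g : ℝ → ℝ} (hf : f ∈ Rclass σ)
    (h : Set.EqOn f g (Set.Ioo (0:ℝ) 2)) : g ∈ Rclass σ := by
  refine ⟨hf.1.congr fun x hx => (h hx).symm, fun m => ?_⟩
  obtain ⟨C, ε, hε, hb⟩ := hf.2 m
  refine ⟨C, ε, hε, fun t ht => ?_⟩
  rw [← iteratedDerivWithin_congr h (mem_II ht)]
  exact hb t ht

lemma Rzero (σ : ℝ) : (fun _ : ℝ => (0:ℝ)) ∈ Rclass σ := by
  refine ⟨contDiffOn_const, fun m => ⟨0, 1, one_pos, fun t ht => ?_⟩⟩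
  have h0 : iteratedDerivWithin m (fun _ : ℝ => (0:ℝ)) (Set.Ioo (0:ℝ) 2) t = 0 := by
    rw [iteratedDerivWithin_eq_iteratedFDerivWithin,
      iteratedFDerivWithin_zero_fun]
    rfl
  simp [h0]

lemma Rmono {σ τ : ℝ} (h : τ ≤ σ) : Rclass σ ⊆ Rclass τ := by
  intro f hf
  refine ⟨hf.1, fun m => ?_⟩
  obtain ⟨C, ε, hε, hb⟩ := hf.2 m
  refine ⟨|C|, min ε 1, by positivity, fun t ht => ?_⟩
  have ht' : t ∈ Set.Ioo (0:ℝ) (min ε 2) :=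
    ⟨ht.1, lt_of_lt_of_le ht.2 (min_le_min (min_le_left _ _) le_rfl)⟩
  have h1 : t ≤ 1 := le_of_lt (lt_of_lt_of_le ht.2 (le_trans (min_le_left _ _) (min_le_right _ _)))
  calc |iteratedDerivWithin m f (Set.Ioo (0:ℝ) 2) t| ≤ C * t ^ (σ - m) := hb t ht'
    _ ≤ |C| * t ^ (σ - m) := by
        have := Real.rpow_nonneg (le_of_lt ht.1) (σ - m)
        nlinarith [le_abs_self C]
    _ ≤ |C| * t ^ (τ - m) := by
        apply mul_le_mul_of_nonneg_left _ (abs_nonneg C)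
        exact Real.rpow_le_rpow_of_exponent_ge ht.1 h1 (by linarith)

lemma Radd {σ : ℝ} {f g : ℝ → ℝ} (hf : f ∈ Rclass σ) (hg : g ∈ Rclass σ) :
    (fun t => f t + g t) ∈ Rclass σ := by
  refine ⟨hf.1.add hg.1, fun m => ?_⟩
  obtain ⟨C₁, ε₁, hε₁, hb₁⟩ := hf.2 m
  obtain ⟨C₂, ε₂, hε₂, hb₂⟩ := hg.2 m
  refine ⟨C₁ + C₂, min ε₁ ε₂, lt_min hε₁ hε₂, fun t ht => ?_⟩
  have ht₁ : t ∈ Set.Ioo (0:ℝ) (min ε₁ 2) :=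
    ⟨ht.1, lt_of_lt_of_le ht.2 (min_le_min (min_le_left _ _) le_rfl)⟩
  have ht₂ : t ∈ Set.Ioo (0:ℝ) (min ε₂ 2) :=
    ⟨ht.1, lt_of_lt_of_le ht.2 (min_le_min (min_le_right _ _) le_rfl)⟩
  have hI := mem_II ht
  have hadd : iteratedDerivWithin m (fun t => f t + g t) (Set.Ioo (0:ℝ) 2) t
      = iteratedDerivWithin m f (Set.Ioo (0:ℝ) 2) t
        + iteratedDerivWithin m g (Set.Ioo (0:ℝ) 2) t := by
    have := iteratedDerivWithin_add hI uII (smOn hf.1 m t hI) (smOn hg.1 m t hI)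
    exact this
  rw [hadd, add_mul]
  exact le_trans (abs_add_le _ _) (add_le_add (hb₁ t ht₁) (hb₂ t ht₂))

lemma Rconst_mul {σ : ℝ} {f : ℝ → ℝ} (c : ℝ) (hf : f ∈ Rclass σ) :
    (fun t => c * f t) ∈ Rclass σ := by
  refine ⟨hf.1.const_smul c, fun m => ?_⟩
  obtain ⟨C, ε, hε, hb⟩ := hf.2 m
  refine ⟨|c| * C, ε, hε, fun t ht => ?_⟩
  rw [iteratedDerivWithin_const_mul (mem_II ht) uII c (smOn hf.1 m t (mem_II ht)), abs_mul, mul_assoc]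
  exact mul_le_mul_of_nonneg_left (hb t ht) (abs_nonneg c)

lemma Rsum {σ : ℝ} {ι : Type*} (s : Finset ι) (f : ι → ℝ → ℝ)
    (h : ∀ i ∈ s, f i ∈ Rclass σ) : (fun t => ∑ i ∈ s, f i t) ∈ Rclass σ := by
  classical
  induction s using Finset.induction with
  | empty => simpa using Rzero σ
  | insert a s hni ih =>
    have : (fun t => ∑ i ∈ insert a s, f i t) = fun t => f a t + ∑ i ∈ s, f i t := by
      funext t; rw [Finset.sum_insert hni]
    rw [this]
    exact Radd (h a (Finset.mem_insert_self a s))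
      (ih fun i hi => h i (Finset.mem_insert_of_mem hi))

lemma Rbdd_all {σ : ℝ} {f : ℝ → ℝ} (hf : f ∈ Rclass σ) (m : ℕ) :
    ∃ C ≥ (0:ℝ), ∃ ε > (0:ℝ), ∀ i ≤ m, ∀ t ∈ Set.Ioo (0:ℝ) (min ε 2),
      |iteratedDerivWithin i f (Set.Ioo (0:ℝ) 2) t| ≤ C * t ^ (σ - i) := by
  induction m with
  | zero =>
    obtain ⟨C, ε, hε, hb⟩ := hf.2 0
    refine ⟨|C|, abs_nonneg _, ε, hε, fun i hi t ht => ?_⟩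
    interval_cases i
    refine le_trans (hb t ht) ?_
    have := Real.rpow_nonneg (le_of_lt ht.1) (σ - (0:ℕ))
    nlinarith [le_abs_self C]
  | succ m ih =>
    obtain ⟨C₁, hC₁, ε₁, hε₁, hb₁⟩ := ih
    obtain ⟨C₂, ε₂, hε₂, hb₂⟩ := hf.2 (m+1)
    refine ⟨max C₁ |C₂|, le_trans hC₁ (le_max_left _ _), min ε₁ ε₂, lt_min hε₁ hε₂,
      fun i hi t ht => ?_⟩
    have ht₁ : t ∈ Set.Ioo (0:ℝ) (min ε₁ 2) :=
      ⟨ht.1, lt_of_lt_of_le ht.2 (min_le_min (min_le_left _ _) le_rfl)⟩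
    have ht₂ : t ∈ Set.Ioo (0:ℝ) (min ε₂ 2) :=
      ⟨ht.1, lt_of_lt_of_le ht.2 (min_le_min (min_le_right _ _) le_rfl)⟩
    rcases Nat.le_succ_iff.mp hi |> fun _ => Nat.lt_succ_iff_lt_or_eq.mp (Nat.lt_succ_of_le hi) with h | h
    · exact le_trans (hb₁ i (Nat.lt_succ_iff.mp h) t ht₁)
        (mul_le_mul_of_nonneg_right (le_max_left _ _) (Real.rpow_nonneg (le_of_lt ht.1) _))
    · subst h
      refine le_trans (hb₂ t ht₂) ?_
      have hrp := Real.rpow_nonneg (le_of_lt ht.1) (σ - ((m+1:ℕ):ℝ))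
      nlinarith [le_abs_self C₂, abs_nonneg C₂, le_max_right C₁ |C₂|, le_max_left C₁ |C₂|]

lemma Rmul {σ τ : ℝ} {f g : ℝ → ℝ} (hf : f ∈ Rclass σ) (hg : g ∈ Rclass τ) :
    (fun t => f t * g t) ∈ Rclass (σ + τ) := by
  refine ⟨hf.1.mul hg.1, fun m => ?_⟩
  obtain ⟨C₁, hC₁, ε₁, hε₁, hb₁⟩ := Rbdd_all hf m
  obtain ⟨C₂, hC₂, ε₂, hε₂, hb₂⟩ := Rbdd_all hg m
  refine ⟨(∑ i ∈ Finset.range (m+1), (m.choose i : ℝ)) * (C₁ * C₂), min ε₁ ε₂,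
    lt_min hε₁ hε₂, fun t ht => ?_⟩
  have ht₁ : t ∈ Set.Ioo (0:ℝ) (min ε₁ 2) :=
    ⟨ht.1, lt_of_lt_of_le ht.2 (min_le_min (min_le_left _ _) le_rfl)⟩
  have ht₂ : t ∈ Set.Ioo (0:ℝ) (min ε₂ 2) :=
    ⟨ht.1, lt_of_lt_of_le ht.2 (min_le_min (min_le_right _ _) le_rfl)⟩
  have hI := mem_II ht
  have key : |iteratedDerivWithin m (fun t => f t * g t) (Set.Ioo (0:ℝ) 2) t|
      ≤ ∑ i ∈ Finset.range (m+1), (m.choose i : ℝ)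
        * |iteratedDerivWithin i f (Set.Ioo (0:ℝ) 2) t|
        * |iteratedDerivWithin (m-i) g (Set.Ioo (0:ℝ) 2) t| := by
    have := norm_iteratedFDerivWithin_mul_le (𝕜 := ℝ) (A := ℝ)
      (hf.1) (hg.1) uII hI (n := m) (by exact_mod_cast le_top)
    simpa [norm_iteratedFDerivWithin_eq_norm_iteratedDerivWithin, Real.norm_eq_abs] using this
  refine le_trans key ?_
  rw [Finset.sum_mul, Finset.sum_mul]
  apply Finset.sum_le_sum
  intro i hi
  have him : i ≤ m := Nat.lt_succ_iff.mp (Finset.mem_range.mp hi)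
  have h1 := hb₁ i him t ht₁
  have h2 := hb₂ (m-i) (Nat.sub_le _ _) t ht₂
  have habs1 : (0:ℝ) ≤ |iteratedDerivWithin i f (Set.Ioo (0:ℝ) 2) t| := abs_nonneg _
  have hrp1 := Real.rpow_nonneg (le_of_lt ht.1) (σ - (i:ℕ))
  have hrp2 := Real.rpow_nonneg (le_of_lt ht.1) (τ - ((m-i:ℕ):ℝ))
  have hmul : |iteratedDerivWithin i f (Set.Ioo (0:ℝ) 2) t|
      * |iteratedDerivWithin (m-i) g (Set.Ioo (0:ℝ) 2) t|
      ≤ (C₁ * t ^ (σ - i)) * (C₂ * t ^ (τ - ((m-i:ℕ):ℝ))) := by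
    apply mul_le_mul h1 h2 (abs_nonneg _) (by positivity)
  have hexp : (C₁ * t ^ (σ - i)) * (C₂ * t ^ (τ - ((m-i:ℕ):ℝ)))
      = C₁ * C₂ * t ^ (σ + τ - m) := by
    have hc : ((m-i:ℕ):ℝ) = (m:ℝ) - (i:ℝ) := by
      rw [Nat.cast_sub him]
    rw [hc, mul_mul_mul_comm, ← Real.rpow_add ht.1]
    congr 1
    ring
  rw [mul_assoc, mul_assoc]
  refine mul_le_mul_of_nonneg_left (le_trans hmul (le_of_eq ?_)) (by positivity)
  rw [hexp, mul_assoc]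

lemma RderivWithin {σ : ℝ} {f : ℝ → ℝ} (hf : f ∈ Rclass σ) :
    derivWithin f (Set.Ioo (0:ℝ) 2) ∈ Rclass (σ - 1) := by
  refine ⟨hf.1.derivWithin uII (by exact_mod_cast le_top), fun m => ?_⟩
  obtain ⟨C, ε, hε, hb⟩ := hf.2 (m+1)
  refine ⟨C, ε, hε, fun t ht => ?_⟩
  rw [← iteratedDerivWithin_succ']
  have := hb t ht
  have hexp : σ - ((m+1:ℕ):ℝ) = σ - 1 - m := by push_cast; ring
  rwa [hexp] at this

lemma iteratedDerivWithin_rpow (e : ℝ) (m : ℕ) :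
    ∀ t ∈ Set.Ioo (0:ℝ) 2, iteratedDerivWithin m (fun s : ℝ => s ^ e) (Set.Ioo (0:ℝ) 2) t
      = (∏ j ∈ Finset.range m, (e - j)) * t ^ (e - m) := by
  induction m with
  | zero => intro t ht; simp
  | succ m ih =>
    intro t ht
    rw [iteratedDerivWithin_succ]
    rw [derivWithin_congr (fun y hy => ih y hy) (ih t ht)]
    rw [derivWithin_of_isOpen isOpen_Ioo ht]
    have hd : HasDerivAt (fun s : ℝ => s ^ (e - m)) ((e - m) * t ^ (e - m - 1)) t :=
      Real.hasDerivAt_rpow_const (Or.inl (ne_of_gt ht.1))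
    rw [deriv_const_mul _ hd.differentiableAt, hd.deriv, Finset.prod_range_succ]
    have : e - ((m+1:ℕ):ℝ) = e - m - 1 := by push_cast; ring
    rw [this]; ring

lemma Rrpow (e : ℝ) : (fun t : ℝ => t ^ e) ∈ Rclass e := by
  refine ⟨fun t ht => (Real.contDiffAt_rpow_const_of_ne (ne_of_gt ht.1)).contDiffWithinAt,
    fun m => ?_⟩
  refine ⟨|∏ j ∈ Finset.range m, (e - j)|, 1, one_pos, fun t ht => ?_⟩
  rw [iteratedDerivWithin_rpow e m t (mem_II ht), abs_mul,
    abs_of_nonneg (Real.rpow_nonneg (le_of_lt ht.1) _)]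

/-- local boundedness from continuity within at 0 -/
lemma loc_bdd {J : Set ℝ} (h0J : (0:ℝ) ∈ J) {F : ℝ → ℝ}
    (h : ContinuousWithinAt F J 0) :
    ∃ C ≥ (0:ℝ), ∃ η > (0:ℝ), ∀ y ∈ J, |y| ≤ η → |F y| ≤ C := by
  have h1 : F ⁻¹' Metric.ball (F 0) 1 ∈ nhdsWithin 0 J :=
    h (Metric.ball_mem_nhds (F 0) one_pos)
  obtain ⟨ε, hε, hsub⟩ := Metric.mem_nhdsWithin_iff.mp h1
  refine ⟨|F 0| + 1, by positivity, ε/2, by positivity, fun y hy hyε => ?_⟩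
  have hball : y ∈ Metric.ball (0:ℝ) ε := by
    rw [Metric.mem_ball, Real.dist_eq, sub_zero]
    linarith
  have := hsub ⟨hball, hy⟩
  rw [Set.mem_preimage, Metric.mem_ball, Real.dist_eq] at this
  calc |F y| = |(F y - F 0) + F 0| := by ring_nf
    _ ≤ |F y - F 0| + |F 0| := abs_add_le _ _
    _ ≤ |F 0| + 1 := by linarith

/-- pointwise Taylor-type bound for a function vanishing to order M at 0 -/
lemma taylor_bound {J : Set ℝ} (hconv : Convex ℝ J) (h0J : (0:ℝ) ∈ J)
    (hJu : UniqueDiffOn ℝ J) (M : ℕ) : ∀ {G : ℝ → ℝ}, ContDiffOn ℝ (⊤:ℕ∞) G J →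
    (∀ i < M, iteratedDerivWithin i G J 0 = 0) →
    ∃ C ≥ (0:ℝ), ∃ η > (0:ℝ), ∀ y ∈ J, |y| ≤ η → |G y| ≤ C * |y| ^ M := by
  induction M with
  | zero =>
    intro G hG _
    obtain ⟨C, hC, η, hη, hb⟩ := loc_bdd h0J ((hG.continuousOn).continuousWithinAt h0J)
    exact ⟨C, hC, η, hη, fun y hy hyη => by simpa using hb y hy hyη⟩
  | succ M ih =>
    intro G hG hvan
    have hG' : ContDiffOn ℝ (⊤:ℕ∞) (derivWithin G J) J :=
      hG.derivWithin hJu (by exact_mod_cast le_top)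
    have hvan' : ∀ i < M, iteratedDerivWithin i (derivWithin G J) J 0 = 0 := by
      intro i hi
      rw [← iteratedDerivWithin_succ']
      exact hvan (i+1) (by omega)
    obtain ⟨C, hC, η, hη, hb⟩ := ih hG' hvan'
    refine ⟨C, hC, η, hη, fun y hy hyη => ?_⟩
    have hG0 : G 0 = 0 := by
      have := hvan 0 (Nat.succ_pos M); simpa using this
    have hsub : Set.uIcc 0 y ⊆ J := hconv.ordConnected.uIcc_subset h0J hy
    have hdiff : DifferentiableOn ℝ G J := hG.differentiableOn (by simp)
    have hder : ∀ x ∈ Set.uIcc 0 y, HasDerivWithinAt G (derivWithin G J x) (Set.uIcc 0 y) x :=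
      fun x hx => ((hdiff x (hsub hx)).hasDerivWithinAt).mono hsub
    have hbound : ∀ x ∈ Set.uIcc 0 y, ‖derivWithin G J x‖ ≤ C * |y| ^ M := by
      intro x hx
      have hxy : |x| ≤ |y| := by
        rcases Set.mem_uIcc.mp hx with ⟨h1, h2⟩ | ⟨h1, h2⟩
        · rw [abs_of_nonneg h1]; exact le_trans h2 (le_abs_self y)
        · rw [abs_of_nonpos h2]; have := neg_le_abs y; linarith
      calc ‖derivWithin G J x‖ = |derivWithin G J x| := rfl
        _ ≤ C * |x| ^ M := hb x (hsub hx) (le_trans hxy hyη)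
        _ ≤ C * |y| ^ M :=
            mul_le_mul_of_nonneg_left (pow_le_pow_left₀ (abs_nonneg _) hxy M) hC
    have hmvt := Convex.norm_image_sub_le_of_norm_hasDerivWithin_le hder hbound
      (convex_uIcc 0 y) (Set.left_mem_uIcc) (Set.right_mem_uIcc)
    rw [hG0, sub_zero, sub_zero] at hmvt
    calc |G y| ≤ C * |y| ^ M * |y| := hmvt
      _ = C * |y| ^ (M+1) := by ring

/-- uniform local bounds on iterated derivatives near 0 -/
lemma deriv_bounds {J : Set ℝ} (h0J : (0:ℝ) ∈ J) (hJu : UniqueDiffOn ℝ J)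
    {G : ℝ → ℝ} (hG : ContDiffOn ℝ (⊤:ℕ∞) G J) (m : ℕ) :
    ∃ C ≥ (0:ℝ), ∃ η > (0:ℝ), ∀ i ≤ m, ∀ y ∈ J, |y| ≤ η →
      |iteratedDerivWithin i G J y| ≤ C := by
  induction m with
  | zero =>
    obtain ⟨C, hC, η, hη, hb⟩ := loc_bdd h0J
      (((hG.continuousOn_iteratedDerivWithin (m := 0) (by exact_mod_cast le_top)
        hJu)).continuousWithinAt h0J)
    refine ⟨C, hC, η, hη, fun i hi y hy hyη => ?_⟩
    interval_cases i
    exact hb y hy hyη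
  | succ m ih =>
    obtain ⟨C₁, hC₁, η₁, hη₁, hb₁⟩ := ih
    obtain ⟨C₂, hC₂, η₂, hη₂, hb₂⟩ := loc_bdd h0J
      (((hG.continuousOn_iteratedDerivWithin (m := m+1) (by exact_mod_cast le_top)
        hJu)).continuousWithinAt h0J)
    refine ⟨max C₁ C₂, le_trans hC₁ (le_max_left _ _), min η₁ η₂, lt_min hη₁ hη₂,
      fun i hi y hy hyη => ?_⟩
    rcases Nat.lt_succ_iff_lt_or_eq.mp (Nat.lt_succ_of_le hi) with h | h
    · exact le_trans (hb₁ i (Nat.lt_succ_iff.mp h) y hy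
        (le_trans hyη (min_le_left _ _))) (le_max_left _ _)
    · subst h
      exact le_trans (hb₂ y hy (le_trans hyη (min_le_right _ _))) (le_max_right _ _)

/-- smallness of g1 near 0 -/
lemma g1_small {g1 : ℝ → ℝ}
    (hlim : Tendsto g1 (nhdsWithin 0 (Set.Ioo (0:ℝ) 2)) (nhds 0)) :
    ∀ η > (0:ℝ), ∃ ε > (0:ℝ), ∀ t ∈ Set.Ioo (0:ℝ) (min ε 2), |g1 t| ≤ η := by
  intro η hη
  have h1 : ∀ᶠ t in nhdsWithin 0 (Set.Ioo (0:ℝ) 2), |g1 t| ≤ η := by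
    filter_upwards [hlim (Metric.closedBall_mem_nhds (0:ℝ) hη)] with t ht
    simpa [Metric.mem_closedBall, Real.dist_eq] using ht
  rw [eventually_nhdsWithin_iff] at h1
  obtain ⟨ε, hε, hb⟩ := Metric.eventually_nhds_iff.mp h1
  refine ⟨ε, hε, fun t ht => ?_⟩
  have h2 : dist t 0 < ε := by
    rw [Real.dist_eq, sub_zero, abs_of_pos ht.1]
    exact lt_of_lt_of_le ht.2 (min_le_left _ _)
  exact hb h2 (mem_II ht)

lemma comp_mem_R {J : Set ℝ} (hconv : Convex ℝ J) (h0J : (0:ℝ) ∈ J)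
    (hJu : UniqueDiffOn ℝ J) {g1 : ℝ → ℝ} {δ : ℝ} (hδ : 0 < δ)
    (hg1R : g1 ∈ Rclass δ) (hmap : Set.MapsTo g1 (Set.Ioo (0:ℝ) 2) J)
    (hlim : Tendsto g1 (nhdsWithin 0 (Set.Ioo (0:ℝ) 2)) (nhds 0)) :
    ∀ (M : ℕ) (G : ℝ → ℝ), ContDiffOn ℝ (⊤:ℕ∞) G J →
      (∀ i < M, iteratedDerivWithin i G J 0 = 0) →
      (fun t => G (g1 t)) ∈ Rclass ((M:ℝ) * δ) := by
  intro M
  induction M with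
  | zero =>
    intro G hG _
    refine ⟨hG.comp hg1R.1 hmap, fun m => ?_⟩
    obtain ⟨CG, hCG, η, hη, hbG⟩ := deriv_bounds h0J hJu hG m
    obtain ⟨ε₁, hε₁, hsm1⟩ := g1_small hlim η hη
    obtain ⟨K, hK, ε₂, hε₂, hbg⟩ := Rbdd_all hg1R m
    set Km := max K 1 with hKm
    have hKm1 : (1:ℝ) ≤ Km := le_max_right _ _
    refine ⟨m.factorial * CG * Km^m, min (min ε₁ ε₂) 1, by positivity, fun t ht => ?_⟩
    have htI : t ∈ Set.Ioo (0:ℝ) 2 := mem_II ht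
    have ht0 : 0 < t := ht.1
    have ht1 : t ≤ 1 := le_of_lt (lt_of_lt_of_le ht.2
      (le_trans (min_le_left _ _) (min_le_right _ _)))
    have ht1' : t ∈ Set.Ioo (0:ℝ) (min ε₁ 2) := ⟨ht.1, lt_of_lt_of_le ht.2
      (min_le_min (le_trans (min_le_left _ _) (min_le_left _ _)) le_rfl)⟩
    have ht2' : t ∈ Set.Ioo (0:ℝ) (min ε₂ 2) := ⟨ht.1, lt_of_lt_of_le ht.2
      (min_le_min (le_trans (min_le_left _ _) (min_le_right _ _)) le_rfl)⟩
    have hC : ∀ i, i ≤ m → ‖iteratedFDerivWithin ℝ i G J (g1 t)‖ ≤ CG := by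
      intro i hi
      rw [norm_iteratedFDerivWithin_eq_norm_iteratedDerivWithin, Real.norm_eq_abs]
      exact hbG i hi (g1 t) (hmap htI) (hsm1 t ht1')
    have hD : ∀ i, 1 ≤ i → i ≤ m →
        ‖iteratedFDerivWithin ℝ i g1 (Set.Ioo (0:ℝ) 2) t‖ ≤ (Km * t⁻¹) ^ i := by
      intro i h1i him
      rw [norm_iteratedFDerivWithin_eq_norm_iteratedDerivWithin, Real.norm_eq_abs]
      refine le_trans (hbg i him t ht2') ?_
      have e1 : t ^ (δ - (i:ℝ)) = t ^ δ * (t⁻¹) ^ i := by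
        rw [sub_eq_add_neg, Real.rpow_add ht0, Real.rpow_neg (le_of_lt ht0),
          Real.rpow_natCast, inv_pow]
      rw [e1, mul_pow]
      have h2 : t ^ δ ≤ 1 := Real.rpow_le_one (le_of_lt ht0) ht1 (le_of_lt hδ)
      have h3 : K ≤ Km ^ i := le_trans (le_max_left _ _) (le_self_pow₀ hKm1 (by omega))
      have h4 : (0:ℝ) < (t⁻¹) ^ i := by positivity
      have h5 : K * (t ^ δ * (t⁻¹) ^ i) ≤ K * (t⁻¹) ^ i := by
        nlinarith [mul_nonneg hK (mul_nonneg (sub_nonneg.mpr h2) h4.le)]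
      have h6 : K * (t⁻¹) ^ i ≤ Km ^ i * (t⁻¹) ^ i :=
        mul_le_mul_of_nonneg_right h3 h4.le
      linarith
    have hcomp := norm_iteratedFDerivWithin_comp_le (𝕜 := ℝ) hG hg1R.1
      (n := m) (by exact_mod_cast le_top) hJu uII hmap htI hC hD
    have heq : |iteratedDerivWithin m (fun t => G (g1 t)) (Set.Ioo (0:ℝ) 2) t|
        = ‖iteratedFDerivWithin ℝ m (G ∘ g1) (Set.Ioo (0:ℝ) 2) t‖ := by
      rw [norm_iteratedFDerivWithin_eq_norm_iteratedDerivWithin, Real.norm_eq_abs]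
      rfl
    rw [heq]
    refine le_trans hcomp (le_of_eq ?_)
    have e2 : t ^ (((0:ℕ):ℝ) * δ - (m:ℝ)) = (t⁻¹) ^ m := by
      rw [Nat.cast_zero, zero_mul, zero_sub, Real.rpow_neg (le_of_lt ht0),
        Real.rpow_natCast, inv_pow]
    rw [e2, mul_pow]
    ring
  | succ M ih =>
    intro G hG hvan
    have hG' : ContDiffOn ℝ (⊤:ℕ∞) (derivWithin G J) J :=
      hG.derivWithin hJu (by exact_mod_cast le_top)
    have hvan' : ∀ i < M, iteratedDerivWithin i (derivWithin G J) J 0 = 0 := by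
      intro i hi
      rw [← iteratedDerivWithin_succ']
      exact hvan (i+1) (by omega)
    have hIH := ih (derivWithin G J) hG' hvan'
    have hphi : (fun t => derivWithin G J (g1 t) * derivWithin g1 (Set.Ioo (0:ℝ) 2) t)
        ∈ Rclass ((M:ℝ) * δ + (δ - 1)) := Rmul hIH (RderivWithin hg1R)
    have hdG : DifferentiableOn ℝ G J := hG.differentiableOn (by simp)
    have hdg1 : DifferentiableOn ℝ g1 (Set.Ioo (0:ℝ) 2) :=
      hg1R.1.differentiableOn (by simp)
    have hchain : Set.EqOn (derivWithin (fun t => G (g1 t)) (Set.Ioo (0:ℝ) 2))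
        (fun t => derivWithin G J (g1 t) * derivWithin g1 (Set.Ioo (0:ℝ) 2) t)
        (Set.Ioo (0:ℝ) 2) := by
      intro t ht
      exact derivWithin_comp t (hdG (g1 t) (hmap ht)) (hdg1 t ht) hmap
    refine ⟨hG.comp hg1R.1 hmap, fun m => ?_⟩
    cases m with
    | zero =>
      obtain ⟨C, hC, η, hη, hb⟩ := taylor_bound hconv h0J hJu (M+1) hG hvan
      obtain ⟨ε₁, hε₁, hsm1⟩ := g1_small hlim η hη
      obtain ⟨K, hK, ε₂, hε₂, hbg⟩ := Rbdd_all hg1R 0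
      refine ⟨C * K^(M+1), min ε₁ ε₂, lt_min hε₁ hε₂, fun t ht => ?_⟩
      have htI : t ∈ Set.Ioo (0:ℝ) 2 := mem_II ht
      have ht0 : 0 < t := ht.1
      have ht1' : t ∈ Set.Ioo (0:ℝ) (min ε₁ 2) := ⟨ht.1, lt_of_lt_of_le ht.2
        (min_le_min (min_le_left _ _) le_rfl)⟩
      have ht2' : t ∈ Set.Ioo (0:ℝ) (min ε₂ 2) := ⟨ht.1, lt_of_lt_of_le ht.2
        (min_le_min (min_le_right _ _) le_rfl)⟩
      have hg1b : |g1 t| ≤ K * t ^ δ := by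
        have := hbg 0 (le_refl 0) t ht2'
        simpa using this
      have hGb : |G (g1 t)| ≤ C * |g1 t| ^ (M+1) :=
        hb (g1 t) (hmap htI) (hsm1 t ht1')
      rw [iteratedDerivWithin_zero]
      refine le_trans hGb ?_
      have h1 : |g1 t| ^ (M+1) ≤ (K * t ^ δ) ^ (M+1) :=
        pow_le_pow_left₀ (abs_nonneg _) hg1b (M+1)
      have h2 : (K * t ^ δ) ^ (M+1) = K^(M+1) * t ^ (((M+1:ℕ):ℝ) * δ) := by
        rw [mul_pow, ← Real.rpow_natCast (t ^ δ) (M+1), ← Real.rpow_mul (le_of_lt ht0)]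
        push_cast
        ring_nf
      have e3 : ((M+1:ℕ):ℝ) * δ - ((0:ℕ):ℝ) = ((M+1:ℕ):ℝ) * δ := by
        push_cast; ring
      rw [e3]
      have h3 : C * |g1 t| ^ (M+1) ≤ C * (K^(M+1) * t ^ (((M+1:ℕ):ℝ) * δ)) := by
        rw [← h2]; exact mul_le_mul_of_nonneg_left h1 hC
      exact le_trans h3 (le_of_eq (by ring))
    | succ m =>
      obtain ⟨C, ε, hε, hb⟩ := hphi.2 m
      refine ⟨C, ε, hε, fun t ht => ?_⟩
      have htI : t ∈ Set.Ioo (0:ℝ) 2 := mem_II ht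
      rw [iteratedDerivWithin_succ',
        iteratedDerivWithin_congr hchain htI]
      have := hb t ht
      have hexp : (M:ℝ) * δ + (δ - 1) - (m:ℝ) = ((M+1:ℕ):ℝ) * δ - ((m+1:ℕ):ℝ) := by
        push_cast; ring
      rwa [hexp] at this

/-- admissible exponent -/
def Adm (α β e : ℝ) : Prop :=
  ((∃ z : ℤ, e = (z : ℝ)) → α < e) ∧ ((¬ ∃ z : ℤ, e = (z : ℝ)) → β < e)

section adm
variable {α : ℕ} {β : ℝ} (hβ : (α:ℝ) ≤ β)
include hβ

lemma adm_gt_alpha {e : ℝ} (h : Adm α β e) : (α:ℝ) < e := by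
  by_cases hz : ∃ z : ℤ, e = (z:ℝ)
  · exact h.1 hz
  · exact lt_of_le_of_lt hβ (h.2 hz)

lemma adm_pos {e : ℝ} (h : Adm α β e) : 0 < e :=
  lt_of_le_of_lt (by positivity) (adm_gt_alpha hβ h)

lemma adm_add {e₁ e₂ : ℝ} (h₁ : Adm α β e₁) (h₂ : Adm α β e₂) : Adm α β (e₁ + e₂) := by
  constructor
  · intro _
    have := adm_gt_alpha hβ h₁
    have := adm_pos hβ h₂
    linarith
  · intro hn
    by_cases hz1 : ∃ z : ℤ, e₁ = (z:ℝ)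
    · by_cases hz2 : ∃ z : ℤ, e₂ = (z:ℝ)
      · obtain ⟨z1, hz1'⟩ := hz1
        obtain ⟨z2, hz2'⟩ := hz2
        exact absurd ⟨z1 + z2, by push_cast [hz1', hz2']; ring⟩ hn
      · have := h₂.2 hz2
        have := adm_pos hβ h₁
        linarith
    · have := h₁.2 hz1
      have := adm_pos hβ h₂
      linarith

lemma adm_add_alpha {e : ℝ} (h : Adm α β e) : Adm α β (e + α) := by
  constructor
  · intro _
    have := adm_pos hβ h
    have := adm_gt_alpha hβ h
    linarith
  · intro hn
    by_cases hz : ∃ z : ℤ, e = (z:ℝ)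
    · obtain ⟨z, hz'⟩ := hz
      exact absurd ⟨z + α, by push_cast [hz']; ring⟩ hn
    · have := h.2 hz
      have : (0:ℝ) ≤ α := by positivity
      linarith [h.2 hz]

lemma adm_add_beta {e : ℝ} (h : Adm α β e) : Adm α β (e + β) := by
  have hβ0 : (0:ℝ) ≤ β := le_trans (by positivity) hβ
  constructor
  · intro _
    have := adm_gt_alpha hβ h
    linarith
  · intro _
    have := adm_pos hβ h
    linarith

lemma adm_two_alpha (hα : 1 ≤ α) : Adm α β ((α:ℝ) + α) := by
  constructor
  · intro _
    have : (1:ℝ) ≤ α := by exact_mod_cast hα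
    linarith
  · intro hn
    exact absurd ⟨(α:ℤ) + α, by push_cast; ring⟩ hn

lemma adm_alpha_beta (hα : 1 ≤ α) (hβ0 : 0 < β) : Adm α β ((α:ℝ) + β) := by
  constructor
  · intro _; linarith
  · intro _
    have : (1:ℝ) ≤ α := by exact_mod_cast hα
    linarith

lemma adm_two_beta (hβ0 : 0 < β) : Adm α β (β + β) := by
  constructor
  · intro _; linarith
  · intro _; linarith

end adm

lemma Pintro {α β : ℝ} {n : ℕ} (a e : Fin n → ℝ) (h : ∀ i, Adm α β (e i)) (p : ℝ → ℝ)
    (hp : ∀ t ∈ Set.Ioo (0:ℝ) 2, p t = ∑ i, a i * t ^ (e i)) : p ∈ Pclass α β :=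
  ⟨n, a, e, fun i hi => (h i).1 hi, fun i hi => (h i).2 hi, hp⟩

lemma Pelim {α β : ℝ} {p : ℝ → ℝ} (hp : p ∈ Pclass α β) :
    ∃ (n : ℕ) (a e : Fin n → ℝ), (∀ i, Adm α β (e i)) ∧
      ∀ t ∈ Set.Ioo (0:ℝ) 2, p t = ∑ i, a i * t ^ (e i) := by
  obtain ⟨n, a, e, h1, h2, h3⟩ := hp
  exact ⟨n, a, e, fun i => ⟨h1 i, h2 i⟩, h3⟩

lemma Pzero (α β : ℝ) : (fun _ : ℝ => (0:ℝ)) ∈ Pclass α β :=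
  Pintro (n := 0) (fun i => i.elim0) (fun i => i.elim0) (fun i => i.elim0) _
    (fun t _ => by simp)

lemma Padd {α β : ℝ} {p q : ℝ → ℝ} (hp : p ∈ Pclass α β) (hq : q ∈ Pclass α β) :
    (fun t => p t + q t) ∈ Pclass α β := by
  obtain ⟨n₁, a₁, e₁, h₁, hp1⟩ := Pelim hp
  obtain ⟨n₂, a₂, e₂, h₂, hp2⟩ := Pelim hq
  refine Pintro (Fin.append a₁ a₂) (Fin.append e₁ e₂) ?_ _ (fun t ht => ?_)
  · refine Fin.addCases ?_ ?_ <;> intro i <;> simp [Fin.append_left, Fin.append_right]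
    exacts [h₁ i, h₂ i]
  · rw [hp1 t ht, hp2 t ht, Fin.sum_univ_add]
    congr 1 <;> apply Finset.sum_congr rfl <;> intro i _ <;>
      simp [Fin.append_left, Fin.append_right]

lemma Pconst_mul {α β : ℝ} (c : ℝ) {p : ℝ → ℝ} (hp : p ∈ Pclass α β) :
    (fun t => c * p t) ∈ Pclass α β := by
  obtain ⟨n, a, e, h, hp1⟩ := Pelim hp
  refine Pintro (fun i => c * a i) e h _ (fun t ht => ?_)
  rw [hp1 t ht, Finset.mul_sum]
  exact Finset.sum_congr rfl (fun i _ => by ring)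

lemma Psingle {α β : ℝ} {c eₑ : ℝ} (h : c = 0 ∨ Adm α β eₑ) :
    (fun t : ℝ => c * t ^ eₑ) ∈ Pclass α β := by
  rcases h with h | h
  · subst h
    refine Set.mem_of_eq_of_mem ?_ (Pzero α β)
    funext t; simp
  · exact Pintro (n := 1) (fun _ => c) (fun _ => eₑ) (fun _ => h) _ (fun t ht => by simp)

lemma Pmul {αn : ℕ} {β : ℝ} (hβ : (αn:ℝ) ≤ β) {p q : ℝ → ℝ}
    (hp : p ∈ Pclass αn β) (hq : q ∈ Pclass αn β) :
    (fun t => p t * q t) ∈ Pclass αn β := by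
  obtain ⟨n₁, a₁, e₁, h₁, hp1⟩ := Pelim hp
  obtain ⟨n₂, a₂, e₂, h₂, hp2⟩ := Pelim hq
  refine Pintro (n := n₁ * n₂)
    (fun k => a₁ (finProdFinEquiv.symm k).1 * a₂ (finProdFinEquiv.symm k).2)
    (fun k => e₁ (finProdFinEquiv.symm k).1 + e₂ (finProdFinEquiv.symm k).2)
    (fun k => adm_add hβ (h₁ _) (h₂ _)) _ (fun t ht => ?_)
  rw [hp1 t ht, hp2 t ht, Finset.sum_mul_sum]
  refine Eq.trans ?_ (Equiv.sum_comp finProdFinEquiv.symm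
    (fun pr : Fin n₁ × Fin n₂ => a₁ pr.1 * a₂ pr.2 * t ^ (e₁ pr.1 + e₂ pr.2))).symm
  rw [Fintype.sum_prod_type]
  apply Finset.sum_congr rfl
  intro i _
  apply Finset.sum_congr rfl
  intro j _
  rw [Real.rpow_add ht.1]
  ring

lemma P_sub_R {α β : ℝ} (hα : 0 ≤ α) (hβ : α ≤ β) {p : ℝ → ℝ} (hp : p ∈ Pclass α β) :
    ∃ δ > (0:ℝ), p ∈ Rclass δ := by
  obtain ⟨n, a, e, h, hp1⟩ := Pelim hp
  have hepos : ∀ i, 0 < e i := by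
    intro i
    by_cases hz : ∃ z : ℤ, e i = (z:ℝ)
    · exact lt_of_le_of_lt hα ((h i).1 hz)
    · exact lt_of_le_of_lt (le_trans hα hβ) ((h i).2 hz)
  rcases Nat.eq_zero_or_pos n with hn | hn
  · subst hn
    refine ⟨1, one_pos, Rcongr (Rzero 1) (fun t ht => ?_)⟩
    rw [hp1 t ht]; simp
  · have hne : Nonempty (Fin n) := Fin.pos_iff_nonempty.mp hn
    set δ := min 1 (Finset.univ.inf' (Finset.univ_nonempty) e) with hδdef
    have hδpos : 0 < δ := by
      apply lt_min one_pos
      rw [Finset.lt_inf'_iff]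
      exact fun i _ => hepos i
    refine ⟨δ, hδpos, Rcongr (Rsum Finset.univ (fun i t => a i * t ^ (e i))
      (fun i _ => Rmono ?_ (Rconst_mul (a i) (Rrpow (e i)))) ) (fun t ht => (hp1 t ht).symm)⟩
    exact le_trans (min_le_right _ _) (Finset.inf'_le e (Finset.mem_univ i))

lemma Qcongr {α β : ℝ} {f g : ℝ → ℝ} (hf : f ∈ Qclass α β)
    (h : Set.EqOn f g (Set.Ioo (0:ℝ) 2)) : g ∈ Qclass α β := by
  intro γ'
  obtain ⟨p, hp, r, hr, heq⟩ := hf γ'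
  exact ⟨p, hp, r, hr, fun t ht => by rw [← h ht]; exact heq t ht⟩

lemma P_sub_Q {α β : ℝ} {p : ℝ → ℝ} (hp : p ∈ Pclass α β) : p ∈ Qclass α β :=
  fun γ' => ⟨p, hp, (fun _ => 0), Rzero γ', fun t _ => by simp⟩

lemma Qadd {α β : ℝ} {f g : ℝ → ℝ} (hf : f ∈ Qclass α β) (hg : g ∈ Qclass α β) :
    (fun t => f t + g t) ∈ Qclass α β := by
  intro γ'
  obtain ⟨p₁, hp₁, r₁, hr₁, he₁⟩ := hf γ'
  obtain ⟨p₂, hp₂, r₂, hr₂, he₂⟩ := hg γ'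
  exact ⟨_, Padd hp₁ hp₂, _, Radd hr₁ hr₂, fun t ht => by
    show f t + g t = _
    rw [he₁ t ht, he₂ t ht]; ring⟩

lemma Qconst_mul {α β : ℝ} (c : ℝ) {f : ℝ → ℝ} (hf : f ∈ Qclass α β) :
    (fun t => c * f t) ∈ Qclass α β := by
  intro γ'
  obtain ⟨p, hp, r, hr, he⟩ := hf γ'
  exact ⟨_, Pconst_mul c hp, _, Rconst_mul c hr, fun t ht => by
    show c * f t = _
    rw [he t ht]; ring⟩

lemma Qsum {α β : ℝ} {ι : Type*} (s : Finset ι) (f : ι → ℝ → ℝ)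
    (h : ∀ i ∈ s, f i ∈ Qclass α β) : (fun t => ∑ i ∈ s, f i t) ∈ Qclass α β := by
  classical
  induction s using Finset.induction with
  | empty => simpa using P_sub_Q (Pzero α β)
  | insert i₀ s hni ih =>
    have : (fun t => ∑ i ∈ insert i₀ s, f i t) = fun t => f i₀ t + ∑ i ∈ s, f i t := by
      funext t; rw [Finset.sum_insert hni]
    rw [this]
    exact Qadd (h i₀ (Finset.mem_insert_self _ _))
      (ih fun i hi => h i (Finset.mem_insert_of_mem hi))

lemma Qmul {αn : ℕ} {β : ℝ} (hβ : (αn:ℝ) ≤ β) {f g : ℝ → ℝ}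
    (hf : f ∈ Qclass αn β) (hg : g ∈ Qclass αn β) :
    (fun t => f t * g t) ∈ Qclass αn β := by
  intro γ'
  set γ₂ := max γ' 0 with hγ₂
  have hγ₂0 : 0 ≤ γ₂ := le_max_right _ _
  have hγ₂γ : γ' ≤ γ₂ := le_max_left _ _
  obtain ⟨p₁, hp₁, r₁, hr₁, he₁⟩ := hf γ₂
  obtain ⟨p₂, hp₂, r₂, hr₂, he₂⟩ := hg γ₂
  obtain ⟨δ₁, hδ₁, hp₁R⟩ := P_sub_R (by positivity) hβ hp₁
  obtain ⟨δ₂, hδ₂, hp₂R⟩ := P_sub_R (by positivity) hβ hp₂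
  have hp₁0 : p₁ ∈ Rclass 0 := Rmono (le_of_lt hδ₁) hp₁R
  have hp₂0 : p₂ ∈ Rclass 0 := Rmono (le_of_lt hδ₂) hp₂R
  have t₁ : (fun t => p₁ t * r₂ t) ∈ Rclass γ' :=
    Rmono (by linarith) (Rmul hp₁0 hr₂)
  have t₂ : (fun t => r₁ t * p₂ t) ∈ Rclass γ' :=
    Rmono (by linarith) (Rmul hr₁ hp₂0)
  have t₃ : (fun t => r₁ t * r₂ t) ∈ Rclass γ' :=
    Rmono (by linarith) (Rmul hr₁ hr₂)
  refine ⟨_, Pmul hβ hp₁ hp₂, _, Radd t₁ (Radd t₂ t₃), fun t ht => ?_⟩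
  show f t * g t = _
  rw [he₁ t ht, he₂ t ht]
  ring

lemma Qshift {αn : ℕ} {β : ℝ} (hβ : (αn:ℝ) ≤ β) {f : ℝ → ℝ} (c μ : ℝ) (hμ : 0 ≤ μ)
    (hshift : ∀ e, Adm (αn:ℝ) β e → Adm (αn:ℝ) β (e + μ)) (hf : f ∈ Qclass αn β) :
    (fun t => c * t ^ μ * f t) ∈ Qclass αn β := by
  intro γ'
  set γ₂ := max γ' 0 with hγ₂
  obtain ⟨p, hp, r, hr, he⟩ := hf γ₂
  obtain ⟨n, a, e, h, hp1⟩ := Pelim hp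
  have hP : (fun t => c * t ^ μ * p t) ∈ Pclass αn β := by
    refine Pintro (fun i => c * a i) (fun i => e i + μ) (fun i => hshift _ (h i)) _
      (fun t ht => ?_)
    rw [hp1 t ht, Finset.mul_sum]
    apply Finset.sum_congr rfl
    intro i _
    rw [Real.rpow_add ht.1]
    ring
  have hR : (fun t => c * t ^ μ * r t) ∈ Rclass γ' := by
    have h1 : (fun t : ℝ => c * t ^ μ) ∈ Rclass 0 :=
      Rmono hμ (Rconst_mul c (Rrpow μ))
    exact Rmono (by rw [zero_add]; exact le_max_left _ _) (Rmul h1 hr)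
  refine ⟨_, hP, _, hR, fun t ht => ?_⟩
  show c * t ^ μ * f t = _
  rw [he t ht]
  ring

lemma iteratedDeriv_zero_fn (m : ℕ) : iteratedDeriv m (fun _ : ℝ => (0:ℝ)) = fun _ => 0 := by
  funext x
  rw [← iteratedDerivWithin_univ, iteratedDerivWithin_eq_iteratedFDerivWithin,
    iteratedFDerivWithin_zero_fun]
  simp

lemma iteratedDeriv_monomial (m : ℕ) : ∀ k : ℕ, iteratedDeriv m (fun y : ℝ => y ^ k)
    = fun y => (k.descFactorial m : ℝ) * y ^ (k - m) := by
  induction m with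
  | zero => intro k; funext y; simp
  | succ m ih =>
    intro k
    rw [iteratedDeriv_succ', show (deriv fun y : ℝ => y ^ k) = fun x => (k:ℝ) * x ^ (k-1) from
        funext fun x => deriv_pow_field k]
    cases k with
    | zero =>
      simp only [Nat.cast_zero, zero_mul]
      rw [iteratedDeriv_zero_fn]
      funext y
      simp [Nat.zero_descFactorial_succ]
    | succ k =>
      have hc : ContDiff ℝ m (fun y : ℝ => y ^ k) := contDiff_id.pow k
      have : (fun x : ℝ => ((k+1:ℕ):ℝ) * x ^ (k+1-1)) = fun x : ℝ => ((k+1:ℕ):ℝ) * x ^ k := by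
        norm_num
      have hcm : iteratedDeriv m (fun x : ℝ => ((k+1:ℕ):ℝ) * x ^ k)
          = fun x => ((k+1:ℕ):ℝ) * iteratedDeriv m (fun y : ℝ => y ^ k) x := by
        funext x
        rw [← iteratedDerivWithin_univ, ← iteratedDerivWithin_univ]
        exact iteratedDerivWithin_const_mul (Set.mem_univ x) uniqueDiffOn_univ _
          hc.contDiffWithinAt
      rw [this]
      push_cast at hcm ⊢
      rw [hcm, ih k]
      funext y
      rw [Nat.succ_descFactorial_succ]
      push_cast
      ring

lemma iteratedDeriv_fin_sum {ι : Type*} (s : Finset ι) (f : ι → ℝ → ℝ)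
    (hf : ∀ i ∈ s, ContDiff ℝ (⊤:ℕ∞) (f i)) (m : ℕ) (x : ℝ) :
    iteratedDeriv m (fun y => ∑ i ∈ s, f i y) x = ∑ i ∈ s, iteratedDeriv m (f i) x := by
  classical
  induction s using Finset.induction with
  | empty => simp [iteratedDeriv_zero_fn]
  | insert a s hni ih =>
    have hrw : (fun y => ∑ i ∈ insert a s, f i y) = fun y => f a y + ∑ i ∈ s, f i y := by
      funext y; rw [Finset.sum_insert hni]
    
    have hca : ContDiffOn ℝ m (f a) Set.univ :=
      ((hf a (Finset.mem_insert_self a s)).of_le (by exact_mod_cast le_top)).contDiffOn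
    have hcs : ContDiffOn ℝ m (fun y => ∑ i ∈ s, f i y) Set.univ := by
      apply ContDiff.contDiffOn
      apply ContDiff.sum
      exact fun i hi => (hf i (Finset.mem_insert_of_mem hi)).of_le (by exact_mod_cast le_top)
    have hadd : iteratedDerivWithin m (fun y => f a y + ∑ i ∈ s, f i y) Set.univ x
        = iteratedDerivWithin m (f a) Set.univ x
          + iteratedDerivWithin m (fun y => ∑ i ∈ s, f i y) Set.univ x :=
      iteratedDerivWithin_add (Set.mem_univ x) uniqueDiffOn_univ (hca x (Set.mem_univ x))
        (hcs x (Set.mem_univ x))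
    rw [hrw, ← iteratedDerivWithin_univ]
    rw [show iteratedDerivWithin m (fun y => f a y + ∑ i ∈ s, f i y) Set.univ x
      = _ from hadd]
    rw [iteratedDerivWithin_univ, iteratedDerivWithin_univ,
      Finset.sum_insert hni, ih (fun i hi => hf i (Finset.mem_insert_of_mem hi))]

lemma iteratedDerivWithin_of_contDiff (m : ℕ) : ∀ {f : ℝ → ℝ}, ContDiff ℝ (⊤:ℕ∞) f →
    ∀ {s : Set ℝ}, UniqueDiffOn ℝ s → ∀ x ∈ s,
    iteratedDerivWithin m f s x = iteratedDeriv m f x := by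
  induction m with
  | zero => intro f _ s _ x _; simp
  | succ m ih =>
    intro f hf s hs x hx
    rw [iteratedDerivWithin_succ', iteratedDeriv_succ']
    have e1 : Set.EqOn (derivWithin f s) (deriv f) s := fun y hy =>
      DifferentiableAt.derivWithin
        ((hf.differentiable (by simp)) y) (hs y hy)
    rw [iteratedDerivWithin_congr e1 hx]
    exact ih (contDiff_infty_iff_deriv.mp hf).2 hs x hx

/-- value of the i-th derivative of a polynomial at 0 -/
lemma iteratedDeriv_poly_at_zero (c : ℕ → ℝ) (N i : ℕ) (hi : i ≤ N) :
    iteratedDeriv i (fun y : ℝ => ∑ k ∈ Finset.range (N+1), c k * y ^ k) 0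
      = c i * (i.factorial : ℝ) := by
  have hsm : ∀ k ∈ Finset.range (N+1), ContDiff ℝ (⊤:ℕ∞) (fun y : ℝ => c k * y ^ k) :=
    fun k _ => contDiff_const.mul (contDiff_id.pow k)
  rw [iteratedDeriv_fin_sum _ _ hsm]
  have hterm : ∀ k ∈ Finset.range (N+1),
      iteratedDeriv i (fun y : ℝ => c k * y ^ k) 0
        = c k * ((k.descFactorial i : ℝ) * (0:ℝ) ^ (k - i)) := by
    intro k _
    have h1 : iteratedDeriv i (fun y : ℝ => c k * y ^ k) 0
        = c k * iteratedDeriv i (fun y : ℝ => y ^ k) 0 := by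
      rw [← iteratedDerivWithin_univ, ← iteratedDerivWithin_univ]
      exact iteratedDerivWithin_const_mul (Set.mem_univ (0:ℝ)) uniqueDiffOn_univ _
        ((contDiff_id.pow k : ContDiff ℝ (i:ℕ) fun y : ℝ => y ^ k)).contDiffWithinAt
    rw [h1, iteratedDeriv_monomial]
  rw [Finset.sum_congr rfl hterm]
  rw [Finset.sum_eq_single i]
  · rw [Nat.descFactorial_self, Nat.sub_self, pow_zero, mul_one]
  · intro k _ hki
    rcases lt_or_gt_of_ne hki with h | h
    · rw [Nat.descFactorial_eq_zero_iff_lt.mpr (by omega)]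
      simp
    · rw [zero_pow (by omega : k - i ≠ 0)]
      simp
  · intro h
    exact absurd (Finset.mem_range.mpr (by omega)) h

end QS

open QS

/-- composition with a `C^∞` function: if
`g₁(t) = a t^α + b t^β + Q_{α,β}(t)` maps `(0,2)` into an interval `J ∋ 0` with
`g₁(t) → 0` as `t ↓ 0`, and `g₂ ∈ C^∞(J)`, then
`g₂(g₁(t)) = g₂(0) + g₂'(0) a t^α + g₂'(0) b t^β + Q_{α,β}(t)`. -/
theorem Qclass_comp_smooth (J : Set ℝ) (hJ : J.OrdConnected) (h0J : (0 : ℝ) ∈ J)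
    (α : ℕ) (β : ℝ) (hβ : (α : ℝ) ≤ β) (a b : ℝ)
    (ha : α = 0 → a = 0) (hb : β = 0 → b = 0)
    (g₁ g₂ q : ℝ → ℝ)
    (hmap : ∀ t ∈ Set.Ioo (0 : ℝ) 2, g₁ t ∈ J)
    (hlim : Tendsto g₁ (nhdsWithin 0 (Set.Ioo (0 : ℝ) 2)) (nhds 0))
    (hq : q ∈ Qclass (α : ℝ) β)
    (hg₁ : ∀ t ∈ Set.Ioo (0 : ℝ) 2, g₁ t = a * t ^ (α : ℝ) + b * t ^ β + q t)
    (hg₂ : ContDiffOn ℝ (⊤ : ℕ∞) g₂ J) :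
    (fun t : ℝ => g₂ (g₁ t) - g₂ 0 - derivWithin g₂ J 0 * a * t ^ (α : ℝ)
        - derivWithin g₂ J 0 * b * t ^ β) ∈ Qclass (α : ℝ) β := by
  classical
  set c' := derivWithin g₂ J 0 with hc'
  have hβ0 : (0:ℝ) ≤ β := le_trans (by positivity) hβ
  by_cases hJdeg : ∀ x ∈ J, x = 0
  · -- degenerate case J = {0}
    have hg10 : ∀ t ∈ Set.Ioo (0:ℝ) 2, g₁ t = 0 := fun t ht => hJdeg _ (hmap t ht)
    refine Qcongr (Qconst_mul c' hq) ?_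
    intro t ht
    have h1 := hg₁ t ht
    rw [hg10 t ht] at h1
    show c' * q t = g₂ (g₁ t) - g₂ 0 - c' * a * t ^ (α:ℝ) - c' * b * t ^ β
    rw [hg10 t ht]
    have h2 : q t = -(a * t ^ (α:ℝ)) - b * t ^ β := by linarith
    rw [h2]
    ring
  · push_neg at hJdeg
    obtain ⟨x₀, hx₀J, hx₀⟩ := hJdeg
    have hconv : Convex ℝ J := convex_iff_ordConnected.mpr hJ
    have hlt : (0:ℝ) ⊓ x₀ < 0 ⊔ x₀ := min_lt_max.mpr (fun h => hx₀ h.symm)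
    have hsub : Set.uIcc 0 x₀ ⊆ J := hJ.uIcc_subset h0J hx₀J
    have hne : (interior J).Nonempty := by
      have h1 : Set.Ioo ((0:ℝ) ⊓ x₀) (0 ⊔ x₀) ⊆ interior J := by
        rw [← interior_Icc]
        exact interior_mono hsub
      exact (Set.nonempty_Ioo.mpr hlt).mono h1
    have hJu : UniqueDiffOn ℝ J := uniqueDiffOn_convex hconv hne
    have hα1 : a ≠ 0 → 1 ≤ α := fun h => Nat.one_le_iff_ne_zero.mpr (fun h0 => h (ha h0))
    have hbpos : b ≠ 0 → 0 < β := fun h =>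
      lt_of_le_of_ne hβ0 (fun h0 => h (hb h0.symm))
    -- L² ∈ Q
    have hL2 : (fun t => (a * t ^ (α:ℝ) + b * t ^ β) * (a * t ^ (α:ℝ) + b * t ^ β))
        ∈ Qclass (α:ℝ) β := by
      have h2a : a*a = 0 ∨ Adm (α:ℝ) β ((α:ℝ) + α) := by
        by_cases h : a = 0
        · left; rw [h]; ring
        · right; exact adm_two_alpha hβ (hα1 h)
      have hab : a*b+a*b = 0 ∨ Adm (α:ℝ) β ((α:ℝ) + β) := by
        by_cases h : a = 0
        · left; rw [h]; ring
        · by_cases h' : b = 0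
          · left; rw [h']; ring
          · right; exact adm_alpha_beta hβ (hα1 h) (hbpos h')
      have h2b : b*b = 0 ∨ Adm (α:ℝ) β (β + β) := by
        by_cases h : b = 0
        · left; rw [h]; ring
        · right; exact adm_two_beta hβ (hbpos h)
      refine Qcongr (P_sub_Q (Padd (Psingle h2a) (Padd (Psingle hab) (Psingle h2b)))) ?_
      intro t ht
      show (a*a) * t^((α:ℝ)+α) + ((a*b+a*b) * t^((α:ℝ)+β) + (b*b)*t^(β+β)) = _
      rw [Real.rpow_add ht.1, Real.rpow_add ht.1, Real.rpow_add ht.1]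
      ring
    -- g₁² ∈ Q
    have hg1sq : (fun t => g₁ t * g₁ t) ∈ Qclass (α:ℝ) β := by
      have t1 : (fun t => (2*a) * t ^ (α:ℝ) * q t) ∈ Qclass (α:ℝ) β :=
        Qshift hβ (2*a) (α:ℝ) (by positivity) (fun e he => adm_add_alpha hβ he) hq
      have t2 : (fun t => (2*b) * t ^ β * q t) ∈ Qclass (α:ℝ) β :=
        Qshift hβ (2*b) β hβ0 (fun e he => adm_add_beta hβ he) hq
      have t3 : (fun t => q t * q t) ∈ Qclass (α:ℝ) β := Qmul hβ hq hq
      refine Qcongr (Qadd hL2 (Qadd t1 (Qadd t2 t3))) ?_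
      intro t ht
      show _ = g₁ t * g₁ t
      rw [hg₁ t ht]
      ring
    -- powers of g₁
    have hpow : ∀ k, 2 ≤ k → (fun t => g₁ t ^ k) ∈ Qclass (α:ℝ) β := by
      intro k hk
      induction k, hk using Nat.le_induction with
      | base =>
        refine Qcongr hg1sq (fun t ht => ?_)
        show g₁ t * g₁ t = g₁ t ^ 2
        ring
      | succ k hk ih =>
        have t1 : (fun t => a * t ^ (α:ℝ) * (g₁ t ^ k)) ∈ Qclass (α:ℝ) β :=
          Qshift hβ a (α:ℝ) (by positivity) (fun e he => adm_add_alpha hβ he) ih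
        have t2 : (fun t => b * t ^ β * (g₁ t ^ k)) ∈ Qclass (α:ℝ) β :=
          Qshift hβ b β hβ0 (fun e he => adm_add_beta hβ he) ih
        have t3 : (fun t => g₁ t ^ k * q t) ∈ Qclass (α:ℝ) β := Qmul hβ ih hq
        refine Qcongr (Qadd t1 (Qadd t2 t3)) (fun t ht => ?_)
        show a * t ^ (α:ℝ) * (g₁ t ^ k) + (b * t ^ β * (g₁ t ^ k) + g₁ t ^ k * q t)
          = g₁ t ^ (k+1)
        rw [pow_succ, hg₁ t ht]
        ring
    -- main construction
    intro γ'
    obtain ⟨pq, hpq, rq, hrq, heqq⟩ := hq (max γ' 1)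
    obtain ⟨δp, hδp, hpqR⟩ := P_sub_R (by positivity) hβ hpq
    set A := if a = 0 then (1:ℝ) else (α:ℝ) with hA
    set B := if b = 0 then (1:ℝ) else β with hB
    have hApos : 0 < A := by
      rw [hA]; split_ifs with h
      · exact one_pos
      · exact_mod_cast Nat.lt_of_lt_of_le Nat.zero_lt_one (hα1 h)
    have hBpos : 0 < B := by
      rw [hB]; split_ifs with h
      · exact one_pos
      · exact hbpos h
    set δ := min (min δp 1) (min A B) with hδ
    have hδpos : 0 < δ := lt_min (lt_min hδp one_pos) (lt_min hApos hBpos)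
    have hδ1 : δ ≤ 1 := le_trans (min_le_left _ _) (min_le_right _ _)
    have hta : (fun t : ℝ => a * t ^ (α:ℝ)) ∈ Rclass δ := by
      by_cases h : a = 0
      · exact Rcongr (Rzero δ) (fun t ht => by simp [h])
      · refine Rmono ?_ (Rconst_mul a (Rrpow (α:ℝ)))
        have hAα : A = (α:ℝ) := by rw [hA, if_neg h]
        calc δ ≤ min A B := min_le_right _ _
          _ ≤ A := min_le_left _ _
          _ = (α:ℝ) := hAα
    have htb : (fun t : ℝ => b * t ^ β) ∈ Rclass δ := by
      by_cases h : b = 0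
      · exact Rcongr (Rzero δ) (fun t ht => by simp [h])
      · refine Rmono ?_ (Rconst_mul b (Rrpow β))
        have hBβ : B = β := by rw [hB, if_neg h]
        calc δ ≤ min A B := min_le_right _ _
          _ ≤ B := min_le_right _ _
          _ = β := hBβ
    have hg1R : g₁ ∈ Rclass δ := by
      refine Rcongr (Radd hta (Radd htb (Radd
        (Rmono (le_trans (min_le_left _ _) (min_le_left _ _)) hpqR)
        (Rmono (le_trans hδ1 (le_max_right _ _)) hrq)))) ?_
      intro t ht
      show a * t ^ (α:ℝ) + (b * t ^ β + (pq t + rq t)) = g₁ t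
      rw [hg₁ t ht, ← heqq t ht]
      ring
    obtain ⟨N₀, hN₀⟩ := exists_nat_ge (γ' / δ)
    set N := max N₀ 1 with hN
    have hN1 : 1 ≤ N := le_max_right _ _
    have hNδ : γ' ≤ ((N+1:ℕ):ℝ) * δ := by
      have h1 : γ' ≤ N₀ * δ := by
        rw [div_le_iff₀ hδpos] at hN₀; linarith
      have h2 : (N₀:ℝ) ≤ ((N+1:ℕ):ℝ) := by
        have : (N₀:ℝ) ≤ (N:ℝ) := by exact_mod_cast le_max_left N₀ 1
        push_cast
        linarith
      nlinarith
    set c : ℕ → ℝ := fun k => iteratedDerivWithin k g₂ J 0 / (k.factorial : ℝ) with hc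
    set Tp : ℝ → ℝ := fun y => ∑ k ∈ Finset.range (N+1), c k * y ^ k with hTp
    set G : ℝ → ℝ := fun y => g₂ y - Tp y with hG
    have hTsm : ContDiff ℝ (⊤:ℕ∞) Tp := by
      rw [hTp]
      exact ContDiff.sum (fun k _ => contDiff_const.mul (contDiff_id.pow k))
    have hGsm : ContDiffOn ℝ (⊤:ℕ∞) G J := by
      rw [hG]
      exact hg₂.sub hTsm.contDiffOn
    have hvan : ∀ i < N+1, iteratedDerivWithin i G J 0 = 0 := by
      intro i hi
      have h1 : iteratedDerivWithin i G J 0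
          = iteratedDerivWithin i g₂ J 0 - iteratedDerivWithin i Tp J 0 := by
        rw [hG]
        exact iteratedDerivWithin_sub h0J hJu
          ((hg₂.of_le (by exact_mod_cast le_top)) 0 h0J)
          ((hTsm.contDiffOn.of_le (by exact_mod_cast le_top)) 0 h0J)
      have h2 : iteratedDerivWithin i Tp J 0 = iteratedDeriv i Tp 0 :=
        iteratedDerivWithin_of_contDiff i hTsm hJu 0 h0J
      have h3 : iteratedDeriv i Tp 0 = c i * (i.factorial : ℝ) := by
        rw [hTp]
        exact iteratedDeriv_poly_at_zero c N i (by omega)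
      rw [h1, h2, h3, hc]
      simp only []
      rw [div_mul_cancel₀ _ (by exact_mod_cast i.factorial_ne_zero : ((i.factorial : ℝ)) ≠ 0)]
      ring
    have hmapsTo : Set.MapsTo g₁ (Set.Ioo (0:ℝ) 2) J := fun t ht => hmap t ht
    have hcomp := comp_mem_R hconv h0J hJu hδpos hg1R hmapsTo hlim (N+1) G hGsm hvan
    have hcompγ : (fun t => G (g₁ t)) ∈ Rclass γ' := Rmono hNδ hcomp
    set S := (Finset.range (N+1)).filter (fun k => 2 ≤ k) with hS
    have hQpart : (fun t => c' * q t + ∑ k ∈ S, c k * g₁ t ^ k) ∈ Qclass (α:ℝ) β :=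
      Qadd (Qconst_mul c' hq) (Qsum S _
        (fun k hk => Qconst_mul (c k) (hpow k (Finset.mem_filter.mp hk).2)))
    obtain ⟨p₁, hp₁, r₁, hr₁, he₁⟩ := hQpart γ'
    refine ⟨p₁, hp₁, (fun t => r₁ t + G (g₁ t)), Radd hr₁ hcompγ, fun t ht => ?_⟩
    have hc0 : c 0 = g₂ 0 := by rw [hc]; simp
    have hc1 : c 1 = c' := by
      rw [hc]
      simp only []
      rw [iteratedDerivWithin_one]
      simp [hc']
    have hsplit : ∑ k ∈ Finset.range (N+1), c k * g₁ t ^ k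
        = g₂ 0 + c' * g₁ t + ∑ k ∈ S, c k * g₁ t ^ k := by
      have h1 := Finset.sum_filter_add_sum_filter_not (Finset.range (N+1))
        (fun k => 2 ≤ k) (fun k => c k * g₁ t ^ k)
      have h2 : (Finset.range (N+1)).filter (fun k => ¬ 2 ≤ k) = {0, 1} := by
        ext k
        simp only [Finset.mem_filter, Finset.mem_range, Finset.mem_insert,
          Finset.mem_singleton]
        omega
      rw [← h1, h2, Finset.sum_pair (by norm_num : (0:ℕ) ≠ 1), hc0, hc1]
      rw [← hS]
      ring
    have hGt : G (g₁ t) = g₂ (g₁ t) - ∑ k ∈ Finset.range (N+1), c k * g₁ t ^ k := rfl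
    have heg := he₁ t ht
    have heg2 := hg₁ t ht
    show g₂ (g₁ t) - g₂ 0 - c' * a * t ^ (α:ℝ) - c' * b * t ^ β
      = p₁ t + (r₁ t + G (g₁ t))
    linear_combination heg + c' * heg2 - hGt + hsplit
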